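/- Suppose φ is real-analytic on 𝕋³ with φ(0) ≠ 0 and let μ₀ = (∫_{𝕋³} φ(t)²/u(0,t) dt)^{−1}. Then the function f(q) = φ(q)/u(0,q) satisfies h_{μ₀}(0)f = 0 pointwise, and f ∈ L¹(𝕋³) \ L²(𝕋³). -/

import Mathlib

open Real MeasureTheory

noncomputable def eps (p : Fin 3 → ℝ) : ℝ := 3 - Real.cos (p 0) - Real.cos (p 1) - Real.cos (p 2)

noncomputable def uu (p q : Fin 3 → ℝ) : ℝ := eps p + eps (p - q) + eps q

/-- The torus `𝕋³`, identified with the cube `(-π, π]³`. -/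
def T3 : Set (Fin 3 → ℝ) := Set.univ.pi fun _ => Set.Ioc (-Real.pi) Real.pi

/-- `m(p) = min_{q ∈ 𝕋³} u(p,q)`, the bottom of the essential spectrum. -/
noncomputable def mfun (p : Fin 3 → ℝ) : ℝ := sInf (uu p '' T3)

/-- The Fredholm determinant `Δ_μ(p,z) = 1 - μ ∫_{𝕋³} φ(t)²/(u(p,t) - z) dt`. -/
noncomputable def Δ (μ : ℝ) (φ : (Fin 3 → ℝ) → ℝ) (p : Fin 3 → ℝ) (z : ℝ) : ℝ :=
  1 - μ * ∫ t in T3, φ t ^ 2 / (uu p t - z)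

open Set Metric

lemma eps_nonneg (q : Fin 3 → ℝ) : 0 ≤ eps q := by
  have h0 := Real.cos_le_one (q 0)
  have h1 := Real.cos_le_one (q 1)
  have h2 := Real.cos_le_one (q 2)
  unfold eps; linarith

lemma eps_neg_eq (q : Fin 3 → ℝ) : eps (-q) = eps q := by
  simp [eps, Real.cos_neg]

lemma uu_zero_eq (q : Fin 3 → ℝ) : uu 0 q = 2 * eps q := by
  have h0 : eps 0 = 0 := by simp [eps]; norm_num
  have h1 : (0 : Fin 3 → ℝ) - q = -q := by simp
  rw [uu, h0, h1, eps_neg_eq]; ring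

lemma continuous_eps : Continuous eps := by
  unfold eps; fun_prop

lemma continuous_uu0 : Continuous (uu 0) := by
  unfold uu; exact ((continuous_eps.comp continuous_const).add
    (continuous_eps.comp (continuous_const.sub continuous_id))).add continuous_eps

lemma mem_T3_iff {q : Fin 3 → ℝ} : q ∈ T3 ↔ ∀ i, q i ∈ Set.Ioc (-π) π := by
  simp [T3, Set.mem_univ_pi]

lemma abs_le_pi_of_mem_T3 {q : Fin 3 → ℝ} (hq : q ∈ T3) : ∀ i, |q i| ≤ π := by
  intro i
  have h := (mem_T3_iff.1 hq) i
  rw [abs_le]; exact ⟨h.1.le, h.2⟩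

lemma eps_pos {q : Fin 3 → ℝ} (h : ∀ i, |q i| ≤ π) (h0 : q ≠ 0) : 0 < eps q := by
  rcases (eps_nonneg q).lt_or_eq with h' | h'
  · exact h'
  · exfalso
    apply h0
    have hπ := Real.pi_pos
    have hcos : ∀ i : Fin 3, Real.cos (q i) = 1 := by
      have c0 := Real.cos_le_one (q 0)
      have c1 := Real.cos_le_one (q 1)
      have c2 := Real.cos_le_one (q 2)
      have : 3 - Real.cos (q 0) - Real.cos (q 1) - Real.cos (q 2) = 0 := h'.symm
      intro i
      fin_cases i <;> simp_all <;> linarith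
    funext i
    have hi := h i
    have h1 : -(2 * π) < q i := by
      have := abs_le.1 hi; nlinarith
    have h2 : q i < 2 * π := by
      have := abs_le.1 hi; nlinarith
    exact (Real.cos_eq_one_iff_of_lt_of_lt h1 h2).1 (hcos i)

lemma eps_le (q : Fin 3 → ℝ) : eps q ≤ 3 / 2 * ‖q‖ ^ 2 := by
  have key : ∀ i : Fin 3, 1 - Real.cos (q i) ≤ ‖q‖ ^ 2 / 2 := by
    intro i
    have h1 := Real.one_sub_sq_div_two_le_cos (x := q i)
    have h2 : |q i| ≤ ‖q‖ := by
      simpa using norm_le_pi_norm q i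
    have h3 : (q i) ^ 2 ≤ ‖q‖ ^ 2 := by
      have := abs_nonneg (q i)
      nlinarith [sq_abs (q i)]
    linarith
  have k0 := key 0; have k1 := key 1; have k2 := key 2
  unfold eps; linarith

lemma eps_lower {q : Fin 3 → ℝ} (h : ∀ i, |q i| ≤ π) :
    (6 / π ^ 2) * ∏ i, ((q i) ^ 2) ^ ((1:ℝ)/3) ≤ eps q := by
  have hπ := Real.pi_pos
  have h2 : (0:ℝ) < π ^ 2 := by positivity
  have key : ∀ i : Fin 3, 2 * (q i) ^ 2 ≤ (1 - Real.cos (q i)) * π ^ 2 := by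
    intro i
    have h5 := Real.cos_le_one_sub_mul_cos_sq (h i)
    have h4 : 2 / π ^ 2 * q i ^ 2 * π ^ 2 = 2 * q i ^ 2 := by field_simp
    nlinarith [mul_le_mul_of_nonneg_right (by linarith : 2 / π ^ 2 * q i ^ 2 ≤ 1 - Real.cos (q i)) h2.le]
  have amgm := Real.geom_mean_le_arith_mean3_weighted
    (by norm_num : (0:ℝ) ≤ 1/3) (by norm_num : (0:ℝ) ≤ 1/3) (by norm_num : (0:ℝ) ≤ 1/3)
    (sq_nonneg (q 0)) (sq_nonneg (q 1)) (sq_nonneg (q 2)) (by norm_num)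
  rw [Fin.prod_univ_three]
  have k0 := key 0; have k1 := key 1; have k2 := key 2
  rw [div_mul_eq_mul_div, div_le_iff₀ h2]
  unfold eps
  nlinarith [amgm]

lemma oneDim_integrable :
    IntegrableOn (fun x : ℝ => ((x ^ 2 : ℝ)) ^ (-(1:ℝ)/3)) (Set.Ioc (-π) π) := by
  have hπ := Real.pi_pos
  have hmeas : Measurable (fun x : ℝ => ((x ^ 2 : ℝ)) ^ (-(1:ℝ)/3)) :=
    (measurable_id.pow_const 2).pow measurable_const
  have hpos : IntegrableOn (fun x : ℝ => ((x ^ 2 : ℝ)) ^ (-(1:ℝ)/3)) (Set.Ioo 0 π) := by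
    have h1 : IntegrableOn (fun x : ℝ => x ^ (-(2:ℝ)/3)) (Set.Ioo 0 π) :=
      (intervalIntegral.integrableOn_Ioo_rpow_iff hπ).2 (by norm_num)
    apply h1.congr_fun _ measurableSet_Ioo
    intro x hx
    show x ^ (-(2:ℝ)/3) = ((x ^ 2 : ℝ)) ^ (-(1:ℝ)/3)
    rw [← Real.rpow_natCast x 2, ← Real.rpow_mul hx.1.le]
    norm_num
  have hneg : IntegrableOn (fun x : ℝ => ((x ^ 2 : ℝ)) ^ (-(1:ℝ)/3)) (Set.Ioo (-π) 0) := by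
    have hset : Set.Ioo (-π) (0:ℝ) = Neg.neg ⁻¹' (Set.Ioo 0 π) := by
      ext x; simp [Set.mem_Ioo, neg_lt, lt_neg, and_comm]
    have hcomp : (fun x : ℝ => ((x ^ 2 : ℝ)) ^ (-(1:ℝ)/3))
        = (fun x : ℝ => ((x ^ 2 : ℝ)) ^ (-(1:ℝ)/3)) ∘ Neg.neg := by
      funext x; simp [Function.comp]
    rw [hset, hcomp, (Measure.measurePreserving_neg (volume : Measure ℝ)).integrableOn_comp_preimage
      (Homeomorph.neg ℝ).measurableEmbedding]
    exact hpos
  have hsub : Set.Ioc (-π) π ⊆ (Set.Ioo (-π) 0 ∪ Set.Ioo 0 π) ∪ ({0, π} : Set ℝ) := by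
    intro x hx
    rcases lt_trichotomy x 0 with h | h | h
    · exact Or.inl (Or.inl ⟨hx.1, h⟩)
    · exact Or.inr (by simp [h])
    · rcases hx.2.lt_or_eq with h' | h'
      · exact Or.inl (Or.inr ⟨h, h'⟩)
      · exact Or.inr (by simp [h'])
  refine (((hneg.union hpos).union ?_).mono_set hsub)
  have : volume ({0, π} : Set ℝ) = 0 :=
    ((Set.finite_singleton π).insert 0).measure_zero volume
  rw [IntegrableOn, Measure.restrict_eq_zero.2 this]
  exact integrable_zero_measure

lemma T3_measurable : MeasurableSet T3 :=
  MeasurableSet.univ_pi fun _ => measurableSet_Ioc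

lemma ae_coords_ne_zero : ∀ᵐ q ∂(volume.restrict T3), ∀ i : Fin 3, q i ≠ 0 := by
  refine ae_restrict_of_ae ?_
  rw [MeasureTheory.volume_pi]
  exact ae_all_iff.2 fun i => MeasureTheory.Measure.ae_eval_ne _ i 0

lemma T3_subset_ball : T3 ⊆ Metric.closedBall (0 : Fin 3 → ℝ) π := by
  intro q hq
  rw [Metric.mem_closedBall, dist_zero_right]
  refine (pi_norm_le_iff_of_nonneg Real.pi_pos.le).2 fun i => ?_
  simpa [Real.norm_eq_abs] using abs_le_pi_of_mem_T3 hq i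

lemma integrableOn_div_uu {ψ : (Fin 3 → ℝ) → ℝ} (hψ : Continuous ψ) :
    IntegrableOn (fun q => ψ q / uu 0 q) T3 := by
  have hπ := Real.pi_pos
  obtain ⟨C, hC⟩ : ∃ C, ∀ q ∈ Metric.closedBall (0 : Fin 3 → ℝ) π, ‖ψ q‖ ≤ C :=
    (isCompact_closedBall _ _).exists_bound_of_continuousOn hψ.continuousOn
  have hCpos : 0 ≤ C := le_trans (norm_nonneg _) (hC 0 (Metric.mem_closedBall_self hπ.le))
  have h1d : Integrable ((Set.Ioc (-π) π).indicator (fun x : ℝ => ((x ^ 2 : ℝ)) ^ (-(1:ℝ)/3))) :=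
    (integrable_indicator_iff measurableSet_Ioc).2 oneDim_integrable
  have hprod : Integrable (fun q : Fin 3 → ℝ =>
      ∏ i, (Set.Ioc (-π) π).indicator (fun x : ℝ => ((x ^ 2 : ℝ)) ^ (-(1:ℝ)/3)) (q i)) :=
    Integrable.fintype_prod (fun _ => h1d)
  have heq : (fun q : Fin 3 → ℝ =>
      ∏ i, (Set.Ioc (-π) π).indicator (fun x : ℝ => ((x ^ 2 : ℝ)) ^ (-(1:ℝ)/3)) (q i))
      = T3.indicator (fun q => ∏ i, ((q i) ^ 2) ^ (-(1:ℝ)/3)) := by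
    funext q
    by_cases hq : q ∈ T3
    · rw [Set.indicator_of_mem hq]
      exact Finset.prod_congr rfl fun i _ => Set.indicator_of_mem (mem_T3_iff.1 hq i) _
    · rw [Set.indicator_of_notMem hq]
      obtain ⟨i, hi⟩ : ∃ i, q i ∉ Set.Ioc (-π) π := by
        by_contra hco; push_neg at hco; exact hq (mem_T3_iff.2 hco)
      exact Finset.prod_eq_zero (Finset.mem_univ i) (Set.indicator_of_notMem hi _)
  have hgint : IntegrableOn
      (fun q => (C * (π ^ 2 / 12)) * ∏ i, ((q i) ^ 2) ^ (-(1:ℝ)/3)) T3 := by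
    have := (integrable_indicator_iff T3_measurable).1 (heq ▸ hprod)
    exact this.const_mul _
  refine Integrable.mono' hgint
    ((hψ.measurable.div continuous_uu0.measurable).aestronglyMeasurable) ?_
  filter_upwards [ae_restrict_mem T3_measurable, ae_coords_ne_zero] with q hq hne
  have habs := abs_le_pi_of_mem_T3 hq
  set P := ∏ i, ((q i) ^ 2) ^ ((1:ℝ)/3) with hP
  have hPpos : 0 < P :=
    Finset.prod_pos fun i _ => Real.rpow_pos_of_pos
      (lt_of_le_of_ne (sq_nonneg _) (Ne.symm (pow_ne_zero _ (hne i)))) _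
  have hlow : (12 / π ^ 2) * P ≤ uu 0 q := by
    rw [uu_zero_eq]
    have := eps_lower habs
    rw [← hP] at this
    have h6 : (12:ℝ) / π ^ 2 * P = 2 * (6 / π ^ 2 * P) := by ring
    linarith
  have h2 : (0:ℝ) < π ^ 2 := by positivity
  have hdpos : 0 < (12 / π ^ 2) * P := by positivity
  have huupos : 0 < uu 0 q := lt_of_lt_of_le hdpos hlow
  have hPinv : P⁻¹ = ∏ i, ((q i) ^ 2) ^ (-(1:ℝ)/3) := by
    rw [hP, ← Finset.prod_inv_distrib]
    refine Finset.prod_congr rfl fun i _ => ?_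
    rw [← Real.rpow_neg (sq_nonneg _)]
    norm_num
  have h1 : |ψ q| / uu 0 q ≤ C / ((12 / π ^ 2) * P) :=
    div_le_div₀ hCpos (by simpa [Real.norm_eq_abs] using hC q (T3_subset_ball hq)) hdpos hlow
  calc ‖ψ q / uu 0 q‖ = |ψ q| / uu 0 q := by
        rw [Real.norm_eq_abs, abs_div, abs_of_pos huupos]
    _ ≤ C / ((12 / π ^ 2) * P) := h1
    _ = (C * (π ^ 2 / 12)) * P⁻¹ := by
        field_simp
    _ = (C * (π ^ 2 / 12)) * ∏ i, ((q i) ^ 2) ^ (-(1:ℝ)/3) := by rw [hPinv]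

lemma one_le_pi : (1:ℝ) < π := by nlinarith [Real.pi_gt_three]

lemma closedBall_subset_T3 {r : ℝ} (hr0 : 0 < r) (hr1 : r ≤ 1) :
    Metric.closedBall (0 : Fin 3 → ℝ) r ⊆ T3 := by
  intro q hq
  rw [Metric.mem_closedBall, dist_zero_right] at hq
  refine mem_T3_iff.2 fun i => ?_
  have h1 : |q i| ≤ r := le_trans (by simpa using norm_le_pi_norm q i) hq
  obtain ⟨ha, hb⟩ := abs_le.1 h1
  have := one_le_pi
  exact ⟨by linarith, by linarith⟩

lemma uu_nonneg (q : Fin 3 → ℝ) : 0 ≤ uu 0 q := by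
  rw [uu_zero_eq]; have := eps_nonneg q; linarith

lemma I_pos {φ : (Fin 3 → ℝ) → ℝ} (hcont : Continuous φ) {r : ℝ} (hr0 : 0 < r) (hr1 : r ≤ 1)
    (hlow : ∀ q : Fin 3 → ℝ, ‖q‖ ≤ r → |φ 0| / 2 ≤ |φ q|) (hφ0 : φ 0 ≠ 0) :
    0 < ∫ t in T3, φ t ^ 2 / uu 0 t := by
  have hπ := Real.pi_pos
  set B := Metric.closedBall (0 : Fin 3 → ℝ) r \ {0} with hB
  have hBsub : B ⊆ T3 := Set.diff_subset.trans (closedBall_subset_T3 hr0 hr1)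
  have hBmeas : MeasurableSet B := measurableSet_closedBall.diff (measurableSet_singleton _)
  have hint : IntegrableOn (fun t => φ t ^ 2 / uu 0 t) T3 :=
    integrableOn_div_uu (by fun_prop)
  set c := (φ 0) ^ 2 / 4 / (3 * r ^ 2) with hc
  have hcpos : 0 < c := by
    have : (φ 0) ^ 2 > 0 := by positivity
    positivity
  have hlb : ∀ q ∈ B, c ≤ φ q ^ 2 / uu 0 q := by
    intro q hq
    obtain ⟨hq1, hq2⟩ := hq
    rw [Metric.mem_closedBall, dist_zero_right] at hq1
    have hqne : q ≠ 0 := by simpa using hq2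
    have habs : ∀ i, |q i| ≤ π := fun i =>
      le_trans (le_trans (by simpa using norm_le_pi_norm q i) hq1) (by linarith [one_le_pi])
    have huupos : 0 < uu 0 q := by
      rw [uu_zero_eq]; have := eps_pos habs hqne; linarith
    have huule : uu 0 q ≤ 3 * r ^ 2 := by
      rw [uu_zero_eq]
      have h1 := eps_le q
      have h2 : ‖q‖ ^ 2 ≤ r ^ 2 := by nlinarith [norm_nonneg q]
      linarith
    have hφsq : (φ 0) ^ 2 / 4 ≤ φ q ^ 2 := by
      have h3 := hlow q hq1
      nlinarith [sq_abs (φ q), sq_abs (φ 0), abs_nonneg (φ 0)]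
    exact div_le_div₀ (sq_nonneg _) hφsq huupos huule
  have hvol : volume B = ENNReal.ofReal ((2 * r) ^ 3) := by
    rw [hB, measure_diff_null (measure_singleton _), Real.volume_pi_closedBall 0 hr0.le]
    simp
  have hge := setIntegral_ge_of_const_le hBmeas
    (by rw [hvol]; exact ENNReal.ofReal_ne_top) hlb (hint.mono_set hBsub)
  have hle : ∫ q in B, φ q ^ 2 / uu 0 q ≤ ∫ q in T3, φ q ^ 2 / uu 0 q :=
    setIntegral_mono_set hint
      (.of_forall fun q => div_nonneg (sq_nonneg _) (uu_nonneg q))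
      (HasSubset.Subset.eventuallyLE hBsub)
  have hvolpos : 0 < (volume B).toReal := by
    rw [hvol, ENNReal.toReal_ofReal (by positivity)]
    positivity
  rw [smul_eq_mul, measureReal_def] at hge
  nlinarith [mul_pos hcpos hvolpos]

set_option maxHeartbeats 2000000 in
lemma not_L2 {φ : (Fin 3 → ℝ) → ℝ} (hcont : Continuous φ) {r : ℝ} (hr0 : 0 < r) (hr1 : r ≤ 1)
    (hlow : ∀ q : Fin 3 → ℝ, ‖q‖ ≤ r → |φ 0| / 2 ≤ |φ q|) (hφ0 : φ 0 ≠ 0) :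
    ¬ MemLp (fun q => φ q / uu 0 q) 2 (volume.restrict T3) := by
  intro hmem
  have hπ := Real.pi_pos
  have hmeas : AEStronglyMeasurable (fun q => φ q / uu 0 q) (volume.restrict T3) :=
    (hcont.measurable.div continuous_uu0.measurable).aestronglyMeasurable
  have hsq : IntegrableOn (fun q => (φ q / uu 0 q) ^ 2) T3 := by
    have := (memLp_two_iff_integrable_sq hmeas).1 hmem
    exact this
  set F := fun q : Fin 3 → ℝ => (φ q / uu 0 q) ^ 2 with hF
  set M := ∫ q in T3, F q with hM
  set c := (φ 0) ^ 2 / 4 with hc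
  have hb : 0 < c := by have : (φ 0)^2 > 0 := by positivity
                        positivity
  set K := 7 * c / (9 * r) with hK
  have hKpos : 0 < K := by positivity
  have key : ∀ n : ℕ, K * 2 ^ n ≤ M := by
    intro n
    set t : ℝ := 2 ^ n with htdef
    have ht : (1:ℝ) ≤ t := one_le_pow₀ (by norm_num)
    have ht0 : (0:ℝ) < t := by positivity
    clear_value t
    have hrt : r / t ≤ r := by
      rw [div_le_iff₀ ht0]; nlinarith
    set s : Set (Fin 3 → ℝ) := Metric.ball 0 (r / t) \ Metric.ball 0 (r / (2 * t)) with hs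
    have hsub2 : Metric.ball (0 : Fin 3 → ℝ) (r / (2 * t)) ⊆ Metric.ball 0 (r / t) :=
      Metric.ball_subset_ball (by rw [div_le_div_iff₀ (by positivity) ht0]; nlinarith)
    have hsmeas : MeasurableSet s := measurableSet_ball.diff measurableSet_ball
    have hssub : s ⊆ T3 :=
      Set.diff_subset.trans ((Metric.ball_subset_closedBall.trans
        (Metric.closedBall_subset_closedBall hrt)).trans (closedBall_subset_T3 hr0 hr1))
    have hvol : volume s = ENNReal.ofReal (7 * r ^ 3 / t ^ 3) := by
      rw [hs, measure_diff hsub2 measurableSet_ball.nullMeasurableSet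
          (measure_ball_lt_top).ne,
        Real.volume_pi_ball _ (by positivity), Real.volume_pi_ball _ (by positivity),
        ← ENNReal.ofReal_sub _ (by positivity)]
      congr 1
      have : Fintype.card (Fin 3) = 3 := by simp
      rw [this]
      field_simp
      ring
    have hlb : ∀ q ∈ s, c * t ^ 4 / (9 * r ^ 4) ≤ F q := by
      intro q hq
      obtain ⟨hq1, hq2⟩ := hq
      rw [Metric.mem_ball, dist_zero_right] at hq1
      rw [Metric.mem_ball, dist_zero_right, not_lt] at hq2
      have hnq : 0 < ‖q‖ := lt_of_lt_of_le (by positivity) hq2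
      have hqne : q ≠ 0 := by
        intro h; rw [h] at hnq; simp at hnq
      have hqler : ‖q‖ ≤ r := le_trans hq1.le hrt
      have habs : ∀ i, |q i| ≤ π := fun i =>
        le_trans (le_trans (by simpa using norm_le_pi_norm q i) hqler)
          (by linarith [one_le_pi])
      have huupos : 0 < uu 0 q := by
        rw [uu_zero_eq]; have := eps_pos habs hqne; linarith
      have huule : uu 0 q ≤ 3 * ‖q‖ ^ 2 := by
        rw [uu_zero_eq]; have := eps_le q; linarith
      have hφsq : c ≤ φ q ^ 2 := by
        have h3 := hlow q hqler
        rw [hc]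
        nlinarith [sq_abs (φ q), sq_abs (φ 0), abs_nonneg (φ 0)]
      have hFq : F q = φ q ^ 2 / (uu 0 q) ^ 2 := by
        simp only [hF]; rw [div_pow]
      rw [hFq]
      have step1 : c / (9 * (r / t) ^ 4) ≤ φ q ^ 2 / (uu 0 q) ^ 2 := by
        apply div_le_div₀ (sq_nonneg _) hφsq (by positivity)
        have hrt0 : 0 < r / t := by positivity
        have h1 : ‖q‖ ^ 2 ≤ (r / t) ^ 2 := by nlinarith
        calc uu 0 q ^ 2 ≤ (3 * ‖q‖ ^ 2) ^ 2 := by nlinarith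
          _ ≤ 9 * (r / t) ^ 4 := by nlinarith [h1, sq_nonneg ‖q‖]
      calc c * t ^ 4 / (9 * r ^ 4) = c / (9 * (r / t) ^ 4) := by
            field_simp
        _ ≤ _ := step1
    have hge := setIntegral_ge_of_const_le hsmeas
      (by rw [hvol]; exact ENNReal.ofReal_ne_top) hlb (hsq.mono_set hssub)
    have hle : ∫ q in s, F q ≤ M :=
      setIntegral_mono_set hsq (.of_forall fun q => sq_nonneg _)
        (HasSubset.Subset.eventuallyLE hssub)
    have hvr : (volume s).toReal = 7 * r ^ 3 / t ^ 3 := by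
      rw [hvol, ENNReal.toReal_ofReal (by positivity)]
    rw [measureReal_def, hvr, smul_eq_mul, mul_comm (7 * r ^ 3 / t ^ 3)] at hge
    have harith : c * t ^ 4 / (9 * r ^ 4) * (7 * r ^ 3 / t ^ 3) = K * t := by
      rw [hK]; field_simp
    rw [harith] at hge
    exact le_trans hge hle
  obtain ⟨n, hn⟩ := pow_unbounded_of_one_lt (M / K) (by norm_num : (1:ℝ) < 2)
  have := key n
  rw [div_lt_iff₀ hKpos] at hn
  nlinarith

/-- If `φ` is real-analytic and even with `φ(0) ≠ 0` and
`μ₀ = (∫ φ(t)²/u(0,t) dt)⁻¹`, then `f(q) = φ(q)/u(0,q)` satisfies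
`h_{μ₀}(0) f = 0` pointwise (away from the singular point `q = 0`),
and `f ∈ L¹(𝕋³) \ L²(𝕋³)`. -/
theorem stmt11 (φ : (Fin 3 → ℝ) → ℝ) (hφ : ∀ x, AnalyticAt ℝ φ x)
    (hev : ∀ t, φ (-t) = φ t) (hφ0 : φ 0 ≠ 0)
    (μ₀ : ℝ) (hμ₀ : μ₀ = (∫ t in T3, φ t ^ 2 / uu 0 t)⁻¹) :
    (∀ q ∈ T3, q ≠ 0 →
      uu 0 q * (φ q / uu 0 q) - μ₀ * φ q * (∫ t in T3, φ t * (φ t / uu 0 t)) = 0) ∧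
    Integrable (fun q => φ q / uu 0 q) (volume.restrict T3) ∧
    ¬ MemLp (fun q => φ q / uu 0 q) 2 (volume.restrict T3) := by
  have hcont : Continuous φ := continuous_iff_continuousAt.2 fun x => (hφ x).continuousAt
  have hb : 0 < |φ 0| / 2 := by positivity
  obtain ⟨δ, hδpos, hδ⟩ := Metric.continuousAt_iff.1 hcont.continuousAt _ hb
  set r := min (δ / 2) 1 with hr
  have hr0 : 0 < r := lt_min (by linarith) one_pos
  have hr1 : r ≤ 1 := min_le_right _ _
  have hlow : ∀ q : Fin 3 → ℝ, ‖q‖ ≤ r → |φ 0| / 2 ≤ |φ q| := by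
    intro q hq
    have hd : dist q 0 < δ := by
      rw [dist_zero_right]
      exact lt_of_le_of_lt hq (lt_of_le_of_lt (min_le_left _ _) (by linarith))
    have h2 := hδ hd
    rw [Real.dist_eq] at h2
    have h1 := abs_sub_abs_le_abs_sub (φ 0) (φ q)
    rw [abs_sub_comm] at h1
    linarith
  have hIpos := I_pos hcont hr0 hr1 hlow hφ0
  refine ⟨?_, integrableOn_div_uu hcont, not_L2 hcont hr0 hr1 hlow hφ0⟩
  intro q hq hqne
  have hIeq : (∫ t in T3, φ t * (φ t / uu 0 t)) = ∫ t in T3, φ t ^ 2 / uu 0 t :=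
    integral_congr_ae (.of_forall fun t => by ring)
  rw [hIeq, hμ₀]
  have huu : uu 0 q ≠ 0 := by
    have h3 := eps_pos (abs_le_pi_of_mem_T3 hq) hqne
    rw [uu_zero_eq]
    positivity
  rw [mul_div_cancel₀ _ huu]
  field_simp
  ring
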